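/- For every complex number z with Re z ≥ 0 and |z| ≤ π/2 which is not a pole of cot, one has Re(cot z - 1/z + 4z/π²) ≥ 0. -/

import Mathlib

open Real Set


lemma pos_of_deriv {f f' : ℝ → ℝ} {b y : ℝ}
    (hd : ∀ t, HasDerivAt f (f' t) t) (h0 : 0 ≤ f 0)
    (hf' : ∀ t, 0 ≤ t → t ≤ b → 0 ≤ f' t) (h0y : 0 ≤ y) (hyb : y ≤ b) : 0 ≤ f y := by
  have hb : (0:ℝ) ≤ b := le_trans h0y hyb
  have hmono : MonotoneOn f (Icc 0 b) :=
    monotoneOn_of_hasDerivWithinAt_nonneg (convex_Icc 0 b)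
      (fun t _ => (hd t).continuousAt.continuousWithinAt)
      (fun t ht => (hd t).hasDerivWithinAt)
      (fun t ht => by
        rw [interior_Icc] at ht
        exact hf' t ht.1.le ht.2.le)
  exact le_trans h0 (hmono ⟨le_refl 0, hb⟩ ⟨h0y, hyb⟩ h0y)

lemma hasDerivAt_poly7 (a0 a1 a2 a3 a4 a5 a6 a7 : ℝ) (t : ℝ) :
    HasDerivAt (fun t : ℝ => a0 + a1*t + a2*t^2 + a3*t^3 + a4*t^4 + a5*t^5 + a6*t^6 + a7*t^7)
      (a1 + 2*a2*t + 3*a3*t^2 + 4*a4*t^3 + 5*a5*t^4 + 6*a6*t^5 + 7*a7*t^6) t := by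
  have h : ∀ n : ℕ, HasDerivAt (fun t : ℝ => t^n) (n * t^(n-1)) t := fun n => hasDerivAt_pow n t
  have := ((((((((hasDerivAt_const t a0).add ((hasDerivAt_id t).const_mul a1)).add
    ((h 2).const_mul a2)).add ((h 3).const_mul a3)).add ((h 4).const_mul a4)).add
    ((h 5).const_mul a5)).add ((h 6).const_mul a6)).add ((h 7).const_mul a7))
  exact this.congr_deriv (by push_cast; ring)

lemma sinA1 {t : ℝ} (ht : 0 ≤ t) : Real.sin t ≤ t := by
  rcases eq_or_lt_of_le ht with h | h
  · simp [← h]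
  · exact (Real.sin_lt h).le

lemma sinA3 {t : ℝ} (ht : 0 ≤ t) : t - t^3/6 ≤ Real.sin t := by
  have := pos_of_deriv (f := fun t => Real.sin t - (0 + 1*t + 0*t^2 + (-1/6)*t^3 + 0*t^4 + 0*t^5 + 0*t^6 + 0*t^7))
    (f' := fun t => Real.cos t - (1 + 2*0*t + 3*(-1/6)*t^2 + 4*0*t^3 + 5*0*t^4 + 6*0*t^5 + 7*0*t^6))
    (fun t => (Real.hasDerivAt_sin t).sub (hasDerivAt_poly7 0 1 0 (-1/6) 0 0 0 0 t))
    (by norm_num)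
    (fun t ht' _ => by nlinarith [Real.one_sub_sq_div_two_le_cos (x := t)])
    ht (le_refl t)
  nlinarith [this]

lemma cosA4 {t : ℝ} (ht : 0 ≤ t) : Real.cos t ≤ 1 - t^2/2 + t^4/24 := by
  have := pos_of_deriv (f := fun t => (1 + 0*t + (-1/2)*t^2 + 0*t^3 + (1/24)*t^4 + 0*t^5 + 0*t^6 + 0*t^7) - Real.cos t)
    (f' := fun t => (0 + 2*(-1/2)*t + 3*0*t^2 + 4*(1/24)*t^3 + 5*0*t^4 + 6*0*t^5 + 7*0*t^6) - (-Real.sin t))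
    (fun t => (hasDerivAt_poly7 1 0 (-1/2) 0 (1/24) 0 0 0 t).sub (Real.hasDerivAt_cos t))
    (by norm_num)
    (fun t ht' _ => by nlinarith [sinA3 ht'])
    ht (le_refl t)
  nlinarith [this]

lemma sinA5 {t : ℝ} (ht : 0 ≤ t) : Real.sin t ≤ t - t^3/6 + t^5/120 := by
  have := pos_of_deriv (f := fun t => (0 + 1*t + 0*t^2 + (-1/6)*t^3 + 0*t^4 + (1/120)*t^5 + 0*t^6 + 0*t^7) - Real.sin t)
    (f' := fun t => (1 + 2*0*t + 3*(-1/6)*t^2 + 4*0*t^3 + 5*(1/120)*t^4 + 6*0*t^5 + 7*0*t^6) - Real.cos t)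
    (fun t => (hasDerivAt_poly7 0 1 0 (-1/6) 0 (1/120) 0 0 t).sub (Real.hasDerivAt_sin t))
    (by norm_num)
    (fun t ht' _ => by nlinarith [cosA4 ht'])
    ht (le_refl t)
  nlinarith [this]

lemma cosA6 {t : ℝ} (ht : 0 ≤ t) : 1 - t^2/2 + t^4/24 - t^6/720 ≤ Real.cos t := by
  have := pos_of_deriv (f := fun t => Real.cos t - (1 + 0*t + (-1/2)*t^2 + 0*t^3 + (1/24)*t^4 + 0*t^5 + (-1/720)*t^6 + 0*t^7))
    (f' := fun t => -Real.sin t - (0 + 2*(-1/2)*t + 3*0*t^2 + 4*(1/24)*t^3 + 5*0*t^4 + 6*(-1/720)*t^5 + 7*0*t^6))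
    (fun t => (Real.hasDerivAt_cos t).sub (hasDerivAt_poly7 1 0 (-1/2) 0 (1/24) 0 (-1/720) 0 t))
    (by norm_num)
    (fun t ht' _ => by nlinarith [sinA5 ht'])
    ht (le_refl t)
  nlinarith [this]

lemma sinA7 {t : ℝ} (ht : 0 ≤ t) : t - t^3/6 + t^5/120 - t^7/5040 ≤ Real.sin t := by
  have := pos_of_deriv (f := fun t => Real.sin t - (0 + 1*t + 0*t^2 + (-1/6)*t^3 + 0*t^4 + (1/120)*t^5 + 0*t^6 + (-1/5040)*t^7))
    (f' := fun t => Real.cos t - (1 + 2*0*t + 3*(-1/6)*t^2 + 4*0*t^3 + 5*(1/120)*t^4 + 6*0*t^5 + 7*(-1/5040)*t^6))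
    (fun t => (Real.hasDerivAt_sin t).sub (hasDerivAt_poly7 0 1 0 (-1/6) 0 (1/120) 0 (-1/5040) t))
    (by norm_num)
    (fun t ht' _ => by nlinarith [cosA6 ht'])
    ht (le_refl t)
  nlinarith [this]

lemma sinhB1 {t : ℝ} (ht : 0 ≤ t) : Real.sinh t ≤ t * Real.cosh t := by
  have := pos_of_deriv (f := fun t => t * Real.cosh t - Real.sinh t)
    (f' := fun t => (1 * Real.cosh t + t * Real.sinh t) - Real.cosh t)
    (fun t => ((hasDerivAt_id t).mul (Real.hasDerivAt_cosh t)).sub (Real.hasDerivAt_sinh t))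
    (by simp)
    (fun t ht' _ => by
      have h := mul_nonneg ht' (Real.sinh_nonneg_iff.2 ht')
      nlinarith)
    ht (le_refl t)
  linarith

lemma coshB2 {t : ℝ} (ht : 0 ≤ t) : Real.cosh t ≤ 1 + t^2/2 * Real.cosh t := by
  have := pos_of_deriv (f := fun t => 1 + t^2/2 * Real.cosh t - Real.cosh t)
    (f' := fun t => (t * Real.cosh t + t^2/2 * Real.sinh t) - Real.sinh t)
    (fun t => by
      have h1 : HasDerivAt (fun t : ℝ => t^2/2) (t) t := by
        have := (hasDerivAt_pow 2 t).div_const 2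
        exact this.congr_deriv (by push_cast; ring)
      have h2 := ((hasDerivAt_const t 1).add (h1.mul (Real.hasDerivAt_cosh t))).sub
        (Real.hasDerivAt_cosh t)
      exact h2.congr_deriv (by simp))
    (by simp)
    (fun t ht' _ => by
      nlinarith [Real.sinh_nonneg_iff.2 ht', sinhB1 ht', mul_nonneg (mul_nonneg ht' ht') (Real.sinh_nonneg_iff.2 ht')])
    ht (le_refl t)
  linarith

-- cosh u ≤ 1.48 on [0, 0.8]
lemma coshB3 {u : ℝ} (hu : 0 ≤ u) (hu8 : u ≤ 0.8) : Real.cosh u ≤ 1.48 := by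
  have h2 := coshB2 hu
  have hc := Real.cosh_pos u
  have hu2 : u^2 ≤ 0.64 := by nlinarith
  nlinarith [mul_le_mul_of_nonneg_right hu2 hc.le]

-- sinh u ≤ 1.48 u on [0, 0.8]
lemma sinhB4 {u : ℝ} (hu : 0 ≤ u) (hu8 : u ≤ 0.8) : Real.sinh u ≤ 1.48 * u := by
  have := pos_of_deriv (f := fun t => 1.48 * t - Real.sinh t)
    (f' := fun t => 1.48 * 1 - Real.cosh t)
    (fun t => ((hasDerivAt_id t).const_mul 1.48).sub (Real.hasDerivAt_sinh t))
    (by simp)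
    (fun t ht' ht8 => by have := coshB3 ht' ht8; linarith)
    hu hu8
  linarith

-- cosh y ≤ 1 + 1.1 y^2 on [0, 1.6]
lemma coshB5 {y : ℝ} (hy : 0 ≤ y) (hy16 : y ≤ 1.6) : Real.cosh y ≤ 1 + 1.1 * y^2 := by
  have h1 : Real.cosh y = Real.cosh (2 * (y/2)) := by ring_nf
  have h2 : Real.cosh (2 * (y/2)) = Real.cosh (y/2)^2 + Real.sinh (y/2)^2 := Real.cosh_two_mul _
  have h3 : Real.cosh (y/2)^2 = 1 + Real.sinh (y/2)^2 := Real.cosh_sq' _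
  have h4 : Real.sinh (y/2) ≤ 1.48 * (y/2) := sinhB4 (by linarith) (by linarith)
  have h5 : 0 ≤ Real.sinh (y/2) := Real.sinh_nonneg_iff.2 (by linarith)
  nlinarith

lemma sinhB6 {y : ℝ} (hy : 0 ≤ y) (hy16 : y ≤ 1.6) : Real.sinh y ≤ y + 1.1/3 * y^3 := by
  have := pos_of_deriv
    (f := fun t => (0 + 1*t + 0*t^2 + (1.1/3)*t^3 + 0*t^4 + 0*t^5 + 0*t^6 + 0*t^7) - Real.sinh t)
    (f' := fun t => (1 + 2*0*t + 3*(1.1/3)*t^2 + 4*0*t^3 + 5*0*t^4 + 6*0*t^5 + 7*0*t^6) - Real.cosh t)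
    (fun t => (hasDerivAt_poly7 0 1 0 (1.1/3) 0 0 0 0 t).sub (Real.hasDerivAt_sinh t))
    (by norm_num)
    (fun t ht' ht16 => by have := coshB5 ht' ht16; nlinarith)
    hy hy16
  nlinarith [this]

lemma coshB7 {y : ℝ} (hy : 0 ≤ y) (hy16 : y ≤ 1.6) : Real.cosh y ≤ 1 + y^2/2 + 1.1/12 * y^4 := by
  have := pos_of_deriv
    (f := fun t => (1 + 0*t + (1/2)*t^2 + 0*t^3 + (1.1/12)*t^4 + 0*t^5 + 0*t^6 + 0*t^7) - Real.cosh t)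
    (f' := fun t => (0 + 2*(1/2)*t + 3*0*t^2 + 4*(1.1/12)*t^3 + 5*0*t^4 + 6*0*t^5 + 7*0*t^6) - Real.sinh t)
    (fun t => (hasDerivAt_poly7 1 0 (1/2) 0 (1.1/12) 0 0 0 t).sub (Real.hasDerivAt_cosh t))
    (by norm_num)
    (fun t ht' ht16 => by have := sinhB6 ht' ht16; nlinarith)
    hy hy16
  nlinarith [this]

lemma sinhB8 {y : ℝ} (hy : 0 ≤ y) (hy16 : y ≤ 1.6) : Real.sinh y ≤ y + y^3/6 + 1.1/60 * y^5 := by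
  have := pos_of_deriv
    (f := fun t => (0 + 1*t + 0*t^2 + (1/6)*t^3 + 0*t^4 + (1.1/60)*t^5 + 0*t^6 + 0*t^7) - Real.sinh t)
    (f' := fun t => (1 + 2*0*t + 3*(1/6)*t^2 + 4*0*t^3 + 5*(1.1/60)*t^4 + 6*0*t^5 + 7*0*t^6) - Real.cosh t)
    (fun t => (hasDerivAt_poly7 0 1 0 (1/6) 0 (1.1/60) 0 0 t).sub (Real.hasDerivAt_sinh t))
    (by norm_num)
    (fun t ht' ht16 => by have := coshB7 ht' ht16; nlinarith)
    hy hy16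
  nlinarith [this]

lemma coshB9 {y : ℝ} (hy : 0 ≤ y) (hy16 : y ≤ 1.6) :
    Real.cosh y ≤ 1 + y^2/2 + y^4/24 + 1.1/360 * y^6 := by
  have := pos_of_deriv
    (f := fun t => (1 + 0*t + (1/2)*t^2 + 0*t^3 + (1/24)*t^4 + 0*t^5 + (1.1/360)*t^6 + 0*t^7) - Real.cosh t)
    (f' := fun t => (0 + 2*(1/2)*t + 3*0*t^2 + 4*(1/24)*t^3 + 5*0*t^4 + 6*(1.1/360)*t^5 + 7*0*t^6) - Real.sinh t)
    (fun t => (hasDerivAt_poly7 1 0 (1/2) 0 (1/24) 0 (1.1/360) 0 t).sub (Real.hasDerivAt_cosh t))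
    (by norm_num)
    (fun t ht' ht16 => by have := sinhB8 ht' ht16; nlinarith)
    hy hy16
  nlinarith [this]

lemma sinhB10 {y : ℝ} (hy : 0 ≤ y) (hy16 : y ≤ 1.6) :
    Real.sinh y ≤ y + y^3/6 + y^5/120 + 1.1/2520 * y^7 := by
  have := pos_of_deriv
    (f := fun t => (0 + 1*t + 0*t^2 + (1/6)*t^3 + 0*t^4 + (1/120)*t^5 + 0*t^6 + (1.1/2520)*t^7) - Real.sinh t)
    (f' := fun t => (1 + 2*0*t + 3*(1/6)*t^2 + 4*0*t^3 + 5*(1/120)*t^4 + 6*0*t^5 + 7*(1.1/2520)*t^6) - Real.cosh t)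
    (fun t => (hasDerivAt_poly7 0 1 0 (1/6) 0 (1/120) 0 (1.1/2520) t).sub (Real.hasDerivAt_sinh t))
    (by norm_num)
    (fun t ht' ht16 => by have := coshB9 ht' ht16; nlinarith)
    hy hy16
  nlinarith [this]

-- final sinh bound
lemma sinh_sq_bound {y : ℝ} (hy : 0 ≤ y) (hy16 : y ≤ 1.6) :
    Real.sinh y ^ 2 ≤ y^2 + y^4/3 + y^6/15 := by
  have h1 := sinhB10 hy hy16
  have h2 : 0 ≤ Real.sinh y := Real.sinh_nonneg_iff.2 hy
  have h3 : Real.sinh y ^ 2 ≤ (y + y^3/6 + y^5/120 + 1.1/2520 * y^7)^2 := by nlinarith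
  have h2' : y^2 ≤ 2.56 := by nlinarith
  have h8 : y^8 ≤ 2.56 * y^6 := by nlinarith [pow_nonneg hy 6]
  have h10 : y^10 ≤ 2.56 * y^8 := by nlinarith [pow_nonneg hy 8]
  have h12 : y^12 ≤ 2.56 * y^10 := by nlinarith [pow_nonneg hy 10]
  have h14 : y^14 ≤ 2.56 * y^12 := by nlinarith [pow_nonneg hy 12]
  nlinarith [pow_nonneg hy 6, pow_nonneg hy 8, pow_nonneg hy 10, pow_nonneg hy 12]


lemma case1poly (x w : ℝ) (hx : 0 ≤ x) (hx12 : x ≤ 1.2) (hw : 0 ≤ w) (hr : x^2 + w ≤ 2.4674022) :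
  0 ≤ 4*(x^2+w)^2 + 4*(x^2+w)*(-x^4/3+2*x^6/45+w^2/3+w^3/15)
      - 9.86961*(x^4/3-4*x^6/45+4*x^8/315+w*(2*x^2/3-2*x^4/15+4*x^6/315)+w^2/3+w^3/15) := by
  have hu : x^2 ≤ 1.44 := by nlinarith
  have hw2 : w ≤ 2.468 := by nlinarith [sq_nonneg x]
  nlinarith [mul_nonneg (mul_nonneg (sq_nonneg x) (sq_nonneg x)) (by linarith : (0:ℝ) ≤ 1.44 - x^2),
    mul_nonneg (mul_nonneg (sq_nonneg x) (sq_nonneg x)) (by linarith : (0:ℝ) ≤ 2.468 - w),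
    sq_nonneg (x^2+w), mul_nonneg (mul_nonneg hw hw) hw,
    mul_nonneg (sq_nonneg x) hw, mul_nonneg (sq_nonneg x) (mul_nonneg hw hw),
    mul_nonneg (mul_nonneg (mul_nonneg (sq_nonneg x) (sq_nonneg x)) (sq_nonneg x)) hw,
    mul_nonneg (pow_nonneg (sq_nonneg x) 3) hw,
    mul_nonneg (pow_nonneg (sq_nonneg x) 2) (sq_nonneg (x*x)),
    mul_nonneg (mul_nonneg (mul_nonneg hw hw) hw) hw,
    mul_nonneg (sq_nonneg x) (mul_nonneg (mul_nonneg hw hw) hw)]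


lemma br1' (s p : ℝ) (hs0 : 0 ≤ s) (hs : s ≤ 0.7416) (hp1 : 3.141592 ≤ p) (hp2 : p ≤ 3.141593) :
    (2*p - s)*(1-s^2/4+s^4/48) ≤ (p-s)*p^2*(1-s^2/6)/4 := by
  nlinarith [mul_nonneg hs0 (sub_nonneg.2 hs), sq_nonneg s, mul_nonneg (mul_nonneg hs0 hs0) hs0,
    mul_nonneg (mul_nonneg hs0 hs0) (sub_nonneg.2 hs),
    mul_nonneg (mul_nonneg (mul_nonneg hs0 hs0) hs0) (sub_nonneg.2 hs),
    sq_nonneg (p - 3.141592), mul_nonneg hs0 (sub_nonneg.2 hp2), mul_nonneg hs0 (sub_nonneg.2 hp1),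
    mul_nonneg (mul_nonneg hs0 hs0) (sub_nonneg.2 hp2)]

lemma br2 (s p : ℝ) (hs0 : 0 ≤ s) (hs : s ≤ 0.7416) (hp1 : 3.141592 ≤ p) (hp2 : p ≤ 3.141593) :
    1.42*((p-s)/2)*(s*(s+4*((p-s)/2))) ≤ p^2*(s-s^3/6)/2 + 4*((p-s)/2)*(1-s^2/4+s^4/48) := by
  nlinarith [mul_nonneg hs0 (sub_nonneg.2 hs), sq_nonneg s, mul_nonneg (mul_nonneg hs0 hs0) hs0,
    mul_nonneg (mul_nonneg hs0 hs0) (sub_nonneg.2 hs),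
    mul_nonneg (mul_nonneg (mul_nonneg hs0 hs0) hs0) (sub_nonneg.2 hs),
    sq_nonneg (p - 3.141592), mul_nonneg hs0 (sub_nonneg.2 hp2), mul_nonneg hs0 (sub_nonneg.2 hp1)]

set_option maxHeartbeats 1600000 in
lemma main_H (x y : ℝ) (hx : 0 ≤ x) (hy : 0 ≤ y) (hr : x^2 + y^2 ≤ Real.pi^2/4) :
    0 ≤ Real.pi^2*(x^2+y^2)*(Real.sin x*Real.cos x)
        + x*(4*(x^2+y^2) - Real.pi^2)*(Real.sin x^2 + Real.sinh y^2) := by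
  have hp1 : 3.141592 ≤ Real.pi := Real.pi_gt_d6.le
  have hp2 : Real.pi ≤ 3.141593 := Real.pi_lt_d6.le
  have hx2 : x ≤ Real.pi/2 := by nlinarith [sq_nonneg y]
  have hy16 : y ≤ 1.6 := by nlinarith [sq_nonneg x]
  have hSH : Real.sinh y ^ 2 ≤ y^2 + y^4/3 + y^6/15 := sinh_sq_bound hy hy16
  have hw : (0:ℝ) ≤ y^2 := sq_nonneg y
  have hsc : Real.sin (2*x) = 2 * (Real.sin x * Real.cos x) := by
    rw [Real.sin_two_mul]; ring
  have hpw : (0:ℝ) < Real.pi^2 := by nlinarith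
  rcases le_or_gt x 1.2 with hx12 | hx12
  · -- case 1
    have h2x : (0:ℝ) ≤ 2*x := by linarith
    have hs1 : 2*x - (2*x)^3/6 + (2*x)^5/120 - (2*x)^7/5040 ≤ Real.sin (2*x) := sinA7 h2x
    have hSC : x - 2*x^3/3 + 2*x^5/15 - 4*x^7/315 ≤ Real.sin x * Real.cos x := by
      rw [hsc] at hs1; linarith [hs1]
    have hc6 : 1 - (2*x)^2/2 + (2*x)^4/24 - (2*x)^6/720 ≤ Real.cos (2*x) := cosA6 h2x
    have hSQ : Real.sin x ^ 2 ≤ x^2 - x^4/3 + 2*x^6/45 := by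
      have h1 := Real.cos_two_mul x
      have h2 := Real.sin_sq_add_cos_sq x
      linarith [hc6]
    have hx144 : x^2 ≤ 1.44 := by nlinarith
    have hB : 0 ≤ x^4/3-4*x^6/45+4*x^8/315+y^2*(2*x^2/3-2*x^4/15+4*x^6/315)+(y^2)^2/3+(y^2)^3/15 := by
      have a1 : 0 ≤ x^2*x^2*(1.44 - x^2) :=
        mul_nonneg (mul_nonneg (sq_nonneg x) (sq_nonneg x)) (by linarith)
      have a2 : 0 ≤ y^2*x^2*(1.44 - x^2) :=
        mul_nonneg (mul_nonneg hw (sq_nonneg x)) (by linarith)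
      have a3 : 0 ≤ x^2*x^2*x^2*x^2 := by positivity
      have a4 : 0 ≤ y^2*x^2*x^2*x^2 := by positivity
      have a5 : 0 ≤ y^2*y^2 := by positivity
      have a6 : 0 ≤ y^2*y^2*y^2 := by positivity
      have a7 : 0 ≤ x^2*x^2 := by positivity
      have a8 : 0 ≤ y^2*x^2 := by positivity
      linarith
    have hq : Real.pi^2 ≤ 9.86961 := by nlinarith
    have hF1 := case1poly x (y^2) hx hx12 hw (by nlinarith : x^2+y^2 ≤ 2.4674022)
    have hmul := mul_le_mul_of_nonneg_right hq hB
    have key : 0 ≤ 4*(x^2+y^2)^2 + 4*(x^2+y^2)*(-x^4/3+2*x^6/45+(y^2)^2/3+(y^2)^3/15)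
        - Real.pi^2*(x^4/3-4*x^6/45+4*x^8/315+y^2*(2*x^2/3-2*x^4/15+4*x^6/315)+(y^2)^2/3+(y^2)^3/15) := by
      linarith [hF1, hmul]
    have hG : 0 ≤ Real.pi^2*(x^2+y^2)*(x - 2*x^3/3 + 2*x^5/15 - 4*x^7/315)
        + x*(4*(x^2+y^2) - Real.pi^2)*((x^2 - x^4/3 + 2*x^6/45) + (y^2 + (y^2)^2/3 + (y^2)^3/15)) := by
      have heq : Real.pi^2*(x^2+y^2)*(x - 2*x^3/3 + 2*x^5/15 - 4*x^7/315)
          + x*(4*(x^2+y^2) - Real.pi^2)*((x^2 - x^4/3 + 2*x^6/45) + (y^2 + (y^2)^2/3 + (y^2)^3/15))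
          = x * (4*(x^2+y^2)^2 + 4*(x^2+y^2)*(-x^4/3+2*x^6/45+(y^2)^2/3+(y^2)^3/15)
            - Real.pi^2*(x^4/3-4*x^6/45+4*x^8/315+y^2*(2*x^2/3-2*x^4/15+4*x^6/315)+(y^2)^2/3+(y^2)^3/15)) := by
        ring
      rw [heq]
      exact mul_nonneg hx key
    have hmul1 : Real.pi^2*(x^2+y^2)*(x - 2*x^3/3 + 2*x^5/15 - 4*x^7/315)
        ≤ Real.pi^2*(x^2+y^2)*(Real.sin x * Real.cos x) :=
      mul_le_mul_of_nonneg_left hSC (by positivity)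
    have hcoef : x*(4*(x^2+y^2) - Real.pi^2) ≤ 0 := by nlinarith
    have hmul2 : x*(4*(x^2+y^2) - Real.pi^2)*((x^2 - x^4/3 + 2*x^6/45) + (y^2 + (y^2)^2/3 + (y^2)^3/15))
        ≤ x*(4*(x^2+y^2) - Real.pi^2)*(Real.sin x^2 + Real.sinh y^2) := by
      apply mul_le_mul_of_nonpos_left _ hcoef
      linarith [hSQ, hSH]
    linarith [hG, hmul1, hmul2]
  · -- case 2
    have hs0' : 0 ≤ Real.pi - 2*x := by linarith
    set s : ℝ := Real.pi - 2*x with hs_def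
    have hs0 : 0 ≤ s := hs0'
    have hs7 : s ≤ 0.7416 := by rw [hs_def]; linarith
    have hxeq : x = (Real.pi - s)/2 := by rw [hs_def]; ring
    have hsin_s : Real.sin (2*x) = Real.sin s := by
      rw [show (2*x : ℝ) = Real.pi - s by rw [hs_def]; ring, Real.sin_pi_sub]
    have hSC : (s - s^3/6)/2 ≤ Real.sin x * Real.cos x := by
      have h3 := sinA3 hs0
      rw [hsc] at hsin_s
      linarith [hsin_s.symm.le]
    have hSQ : Real.sin x ^ 2 ≤ 1 - s^2/4 + s^4/48 := by
      have h1 := Real.cos_two_mul x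
      have h2 := Real.sin_sq_add_cos_sq x
      have h3 := cosA4 hs0
      have hcos_s : Real.cos (2*x) = -Real.cos s := by
        rw [show (2*x : ℝ) = Real.pi - s by rw [hs_def]; ring, Real.cos_pi_sub]
      rw [hcos_s] at h1
      linarith
    have hKeq : Real.pi^2 - 4*(x^2+y^2) = s*(s+4*x) - 4*y^2 := by rw [hxeq]; ring
    have hK : 0 ≤ s*(s+4*x) - 4*(y^2) := by rw [← hKeq]; linarith [hr]
    have hs4x : s + 4*x = 2*Real.pi - s := by rw [hxeq]; ring
    have hw1 : y^2 ≤ 1.0275 := by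
      have h1 : 0 ≤ (0.7416 - s)*(2*Real.pi - s - 0.7416) :=
        mul_nonneg (by linarith) (by linarith)
      nlinarith [hK, hs4x]
    have hMw : y^2 + (y^2)^2/3 + (y^2)^3/15 ≤ 1.42*y^2 := by
      have b1 : y^2*y^2 ≤ 1.0275*y^2 := by nlinarith [mul_nonneg hw (sub_nonneg.2 hw1)]
      have b2 : y^2*y^2*y^2 ≤ 1.0275*(y^2*y^2) := by
        nlinarith [mul_nonneg (mul_nonneg hw hw) (sub_nonneg.2 hw1)]
      nlinarith [b1, b2]
    have hM0 : (0:ℝ) ≤ 1 - s^2/4 + s^4/48 := by nlinarith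
    have hb1 := br1' s Real.pi hs0 hs7 hp1 hp2
    have hb2 := br2 s Real.pi hs0 hs7 hp1 hp2
    have hxK : 0 ≤ x*(s*(s+4*x) - 4*y^2) := mul_nonneg hx hK
    have hchain : x*(s*(s+4*x) - 4*y^2)*((1 - s^2/4 + s^4/48) + (y^2 + (y^2)^2/3 + (y^2)^3/15))
        ≤ Real.pi^2*(s - s^3/6)/2 * (x^2 + y^2) := by
      have hK0 : x*(s*(s+4*x) - 4*y^2) ≤ x*(s*(s+4*x)) := by nlinarith [mul_nonneg hx hw]
      have e1a : x*(s*(s+4*x) - 4*y^2)*(y^2 + (y^2)^2/3 + (y^2)^3/15)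
          ≤ x*(s*(s+4*x) - 4*y^2)*(1.42*y^2) := mul_le_mul_of_nonneg_left hMw hxK
      have e1b : x*(s*(s+4*x) - 4*y^2)*(1.42*y^2) ≤ x*(s*(s+4*x))*(1.42*y^2) := by
        have := mul_le_mul_of_nonneg_right hK0 (by positivity : (0:ℝ) ≤ 1.42*y^2)
        linarith [this]
      have e3 : x*(s*(s+4*x))*(1 - s^2/4 + s^4/48) ≤ Real.pi^2*(s - s^3/6)/2 * x^2 := by
        have hxs : (0:ℝ) ≤ x*s := mul_nonneg hx hs0
        have h := mul_le_mul_of_nonneg_left hb1 hxs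
        calc x*(s*(s+4*x))*(1 - s^2/4 + s^4/48)
            = x*s*((2*Real.pi - s)*(1-s^2/4+s^4/48)) := by rw [hxeq]; ring
          _ ≤ x*s*((Real.pi-s)*Real.pi^2*(1-s^2/6)/4) := h
          _ = Real.pi^2*(s - s^3/6)/2 * x^2 := by rw [hxeq]; ring
      have e4 : x*(s*(s+4*x))*(1.42*y^2)
          ≤ Real.pi^2*(s - s^3/6)/2*y^2 + 4*x*(1 - s^2/4 + s^4/48)*y^2 := by
        have h := mul_le_mul_of_nonneg_left hb2 hw
        calc x*(s*(s+4*x))*(1.42*y^2)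
            = y^2*(1.42*((Real.pi-s)/2)*(s*(s+4*((Real.pi-s)/2)))) := by rw [hxeq]; ring
          _ ≤ y^2*(Real.pi^2*(s-s^3/6)/2 + 4*((Real.pi-s)/2)*(1-s^2/4+s^4/48)) := h
          _ = Real.pi^2*(s - s^3/6)/2*y^2 + 4*x*(1 - s^2/4 + s^4/48)*y^2 := by rw [hxeq]; ring
      have e2 : x*(s*(s+4*x) - 4*y^2)*(1 - s^2/4 + s^4/48)
          = x*(s*(s+4*x))*(1 - s^2/4 + s^4/48) - 4*x*y^2*(1 - s^2/4 + s^4/48) := by ring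
      linarith [e1a, e1b, e2, e3, e4]
    have hup : Real.sin x ^2 + Real.sinh y ^2
        ≤ (1 - s^2/4 + s^4/48) + (y^2 + (y^2)^2/3 + (y^2)^3/15) := by linarith [hSQ, hSH]
    have hstep1 : x*(s*(s+4*x) - 4*y^2)*(Real.sin x^2 + Real.sinh y^2)
        ≤ x*(s*(s+4*x) - 4*y^2)*((1 - s^2/4 + s^4/48) + (y^2 + (y^2)^2/3 + (y^2)^3/15)) :=
      mul_le_mul_of_nonneg_left hup hxK
    have hstep2 : Real.pi^2*(x^2+y^2)*((s - s^3/6)/2)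
        ≤ Real.pi^2*(x^2+y^2)*(Real.sin x * Real.cos x) :=
      mul_le_mul_of_nonneg_left hSC (by positivity)
    have hrw : x*(4*(x^2+y^2) - Real.pi^2)*(Real.sin x^2 + Real.sinh y^2)
        = -(x*(s*(s+4*x) - 4*y^2)*(Real.sin x^2 + Real.sinh y^2)) := by
      rw [hxeq]; ring
    rw [hrw]
    linarith [hchain, hstep1, hstep2]

theorem cot_re_lower (z : ℂ) (hre : 0 ≤ z.re) (habs : ‖z‖ ≤ π / 2)
    (hsin : Complex.sin z ≠ 0) :
    0 ≤ (Complex.cot z - 1 / z + 4 * z / (π : ℂ) ^ 2).re := by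
  set x := z.re with hxdef
  set y := z.im with hydef
  have hz : z ≠ 0 := by
    rintro rfl; exact hsin (by simp)
  have hNSpos : 0 < Complex.normSq z := Complex.normSq_pos.2 hz
  have hNS : Complex.normSq z = x^2 + y^2 := by
    rw [Complex.normSq_apply]; ring
  have hr : x^2 + y^2 ≤ Real.pi^2/4 := by
    have h := Complex.sq_norm z
    have h2 : ‖z‖ ^ 2 ≤ (π/2)^2 :=
      pow_le_pow_left₀ (norm_nonneg z) habs 2
    rw [h, hNS] at h2
    nlinarith [h2]
  have hsre : (Complex.sin z).re = Real.sin x * Real.cosh y := by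
    rw [Complex.sin_eq]
    simp [← hxdef, ← hydef, Complex.sin_ofReal_re, Complex.sin_ofReal_im,
      Complex.cos_ofReal_re, Complex.cos_ofReal_im, Complex.sinh_ofReal_re, Complex.sinh_ofReal_im,
      Complex.cosh_ofReal_re, Complex.cosh_ofReal_im]
  have hsim : (Complex.sin z).im = Real.cos x * Real.sinh y := by
    rw [Complex.sin_eq]
    simp [← hxdef, ← hydef, Complex.sin_ofReal_re, Complex.sin_ofReal_im,
      Complex.cos_ofReal_re, Complex.cos_ofReal_im, Complex.sinh_ofReal_re, Complex.sinh_ofReal_im,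
      Complex.cosh_ofReal_re, Complex.cosh_ofReal_im]
  have hcre : (Complex.cos z).re = Real.cos x * Real.cosh y := by
    rw [Complex.cos_eq]
    simp [← hxdef, ← hydef, Complex.sin_ofReal_re, Complex.sin_ofReal_im,
      Complex.cos_ofReal_re, Complex.cos_ofReal_im, Complex.sinh_ofReal_re, Complex.sinh_ofReal_im,
      Complex.cosh_ofReal_re, Complex.cosh_ofReal_im]
  have hcim : (Complex.cos z).im = -(Real.sin x * Real.sinh y) := by
    rw [Complex.cos_eq]
    simp [← hxdef, ← hydef, Complex.sin_ofReal_re, Complex.sin_ofReal_im,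
      Complex.cos_ofReal_re, Complex.cos_ofReal_im, Complex.sinh_ofReal_re, Complex.sinh_ofReal_im,
      Complex.cosh_ofReal_re, Complex.cosh_ofReal_im]
  have hD : Complex.normSq (Complex.sin z) = Real.sin x^2 + Real.sinh y^2 := by
    rw [Complex.normSq_apply, hsre, hsim]
    linear_combination (Real.sin x^2)*(Real.cosh_sq y) + (Real.sinh y^2)*(Real.sin_sq_add_cos_sq x)
  have hDpos : 0 < Real.sin x^2 + Real.sinh y^2 := by
    rw [← hD]; exact Complex.normSq_pos.2 hsin
  have hπ2 : ((π : ℂ))^2 = ((π^2 : ℝ) : ℂ) := by push_cast; ring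
  have hrecalc : (Complex.cot z - 1 / z + 4 * z / (π : ℂ) ^ 2).re
      = (Real.sin x * Real.cos x)/(Real.sin x^2 + Real.sinh y^2) - x/(x^2+y^2) + 4*x/π^2 := by
    rw [Complex.add_re, Complex.sub_re, Complex.cot_eq_cos_div_sin, Complex.div_re,
      hD, hsre, hsim, hcre, hcim, one_div, Complex.inv_re, hNS, hπ2, Complex.div_ofReal_re]
    have h1 : (4 * z).re = 4 * x := by simp [← hxdef]
    rw [h1]
    have h2 : Real.cos x * Real.cosh y * (Real.sin x * Real.cosh y) +
        -(Real.sin x * Real.sinh y) * (Real.cos x * Real.sinh y) = Real.sin x * Real.cos x := by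
      linear_combination (Real.sin x * Real.cos x) * (Real.cosh_sq_sub_sinh_sq y)
    rw [← add_div, h2]
  rw [hrecalc]
  have hmain := main_H x |y| hre (abs_nonneg y) (by rw [sq_abs]; exact hr)
  have habs2 : Real.sinh |y| ^ 2 = Real.sinh y ^2 := by
    rcases le_or_gt 0 y with h | h
    · rw [abs_of_nonneg h]
    · rw [abs_of_neg h, Real.sinh_neg]; ring
  rw [sq_abs, habs2] at hmain
  have hπpos : (0:ℝ) < π^2 := by positivity
  have hNpos : (0:ℝ) < x^2+y^2 := by rw [← hNS]; exact hNSpos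
  have key : (Real.sin x * Real.cos x)/(Real.sin x^2 + Real.sinh y^2) - x/(x^2+y^2) + 4*x/π^2
      = (Real.pi^2*(x^2+y^2)*(Real.sin x*Real.cos x)
          + x*(4*(x^2+y^2) - Real.pi^2)*(Real.sin x^2 + Real.sinh y^2))
        / (Real.pi^2*(x^2+y^2)*(Real.sin x^2 + Real.sinh y^2)) := by
    field_simp
    ring
  rw [key]
  exact div_nonneg hmain (by positivity)
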